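/- The function φ(t) = (1/2)·[√(1 + 4t²) − 1 + log((√(1+4t²) − 1)/(2t²))] (extended by φ(0) = 0) is even, convex, satisfies φ''(0) = 1, |φ'(t)| < 1 for all t ∈ ℝ, and |φ'''(t)| ≤ 2√2 · (φ''(t))^{3/2} for all t ∈ ℝ. -/

import Mathlib

noncomputable def Sfun (t : ℝ) : ℝ := Real.sqrt (1 + 4 * t ^ 2)
noncomputable def Psi (t : ℝ) : ℝ :=
  (1/2) * (Sfun t - 1) + (1/2) * Real.log 2 - (1/2) * Real.log (1 + Sfun t)
noncomputable def Gfun (t : ℝ) : ℝ := 2 * t / (1 + Sfun t)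
noncomputable def Hfun (t : ℝ) : ℝ := 2 / (Sfun t * (1 + Sfun t))
noncomputable def Kfun (t : ℝ) : ℝ := -(8 * t * (1 + 2 * Sfun t)) / (Sfun t ^ 3 * (1 + Sfun t) ^ 2)

lemma S_sq (t : ℝ) : Sfun t ^ 2 = 1 + 4 * t ^ 2 :=
  Real.sq_sqrt (by positivity)

lemma S_nonneg (t : ℝ) : 0 ≤ Sfun t := Real.sqrt_nonneg _

lemma S_one_le (t : ℝ) : 1 ≤ Sfun t := by
  nlinarith [S_sq t, S_nonneg t, sq_nonneg t]

lemma S_pos (t : ℝ) : 0 < Sfun t := lt_of_lt_of_le one_pos (S_one_le t)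

lemma S_hasDeriv (t : ℝ) : HasDerivAt Sfun (4 * t / Sfun t) t := by
  have h1 : HasDerivAt (fun t : ℝ => 1 + 4 * t ^ 2) (8 * t) t := by
    have := ((hasDerivAt_pow 2 t).const_mul 4).const_add (1 : ℝ)
    refine this.congr_deriv ?_; symm
    simp; ring
  have := (Real.hasDerivAt_sqrt (x := 1 + 4 * t ^ 2) (by positivity)).comp t h1
  refine this.congr_deriv ?_; symm
  rw [Sfun]; ring

lemma Psi_hasDeriv (t : ℝ) : HasDerivAt Psi (Gfun t) t := by
  have hs := S_hasDeriv t
  have hS := S_pos t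
  have h1S : (0:ℝ) < 1 + Sfun t := by linarith
  have h1 : HasDerivAt (fun t => (1/2) * (Sfun t - 1)) ((1/2) * (4 * t / Sfun t)) t :=
    ((hs.sub_const 1).const_mul _)
  have h2 : HasDerivAt (fun t => (1/2) * Real.log (1 + Sfun t))
      ((1/2) * ((4 * t / Sfun t) / (1 + Sfun t))) t :=
    ((hs.const_add 1).log (ne_of_gt h1S)).const_mul (1/2 : ℝ)
  have h3 := (h1.add_const ((1/2) * Real.log 2)).sub h2
  unfold Psi Gfun
  refine h3.congr_deriv ?_; symm
  have hsq := S_sq t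
  field_simp
  nlinarith [hsq]

lemma G_hasDeriv (t : ℝ) : HasDerivAt Gfun (Hfun t) t := by
  have hs := S_hasDeriv t
  have hS := S_pos t
  have hsq := S_sq t
  have hden : (0:ℝ) < 1 + Sfun t := by linarith
  have h := ((hasDerivAt_id t).const_mul (2:ℝ)).div (hs.const_add 1) (ne_of_gt hden)
  unfold Gfun Hfun
  refine h.congr_deriv ?_; symm
  simp only [id]
  field_simp
  nlinarith [hsq]

lemma H_hasDeriv (t : ℝ) : HasDerivAt Hfun (Kfun t) t := by
  have hs := S_hasDeriv t
  have hS := S_pos t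
  have hsq := S_sq t
  have h1S : (0:ℝ) < 1 + Sfun t := by linarith
  have hden : Sfun t * (1 + Sfun t) ≠ 0 := by positivity
  have h := (hasDerivAt_const t (2:ℝ)).div (hs.mul (hs.const_add 1)) hden
  unfold Hfun Kfun
  refine h.congr_deriv ?_; symm
  simp only [Pi.mul_apply]
  field_simp
  ring

theorem stmt_10 :
    let φ : ℝ → ℝ := fun t =>
      if t = 0 then 0 else
        (1/2) * (Real.sqrt (1 + 4 * t ^ 2) - 1 +
          Real.log ((Real.sqrt (1 + 4 * t ^ 2) - 1) / (2 * t ^ 2)))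
    (∀ t, φ (-t) = φ t) ∧ ConvexOn ℝ Set.univ φ ∧ iteratedDeriv 2 φ 0 = 1 ∧
    (∀ t, |deriv φ t| < 1) ∧
    (∀ t, |iteratedDeriv 3 φ t| ≤ 2 * Real.sqrt 2 * (iteratedDeriv 2 φ t) ^ (3/2 : ℝ)) := by
  intro φ
  have hφ : φ = Psi := by
    funext t
    show (if t = 0 then 0 else _) = _
    by_cases ht : t = 0
    · simp only [ht, if_true, Psi, Sfun]
      norm_num
    · have hS := S_pos t
      have hsq := S_sq t
      have harg : (Real.sqrt (1 + 4 * t ^ 2) - 1) / (2 * t ^ 2) = 2 / (1 + Sfun t) := by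
        rw [show Real.sqrt (1 + 4 * t ^ 2) = Sfun t from rfl]
        have ht2 : (t:ℝ) ^ 2 ≠ 0 := pow_ne_zero _ ht
        have h1S : (1:ℝ) + Sfun t ≠ 0 := by positivity
        field_simp
        nlinarith [hsq]
      simp only [ht, if_false, harg, Psi, Sfun]
      rw [Real.log_div two_ne_zero (by positivity : (1:ℝ) + Real.sqrt (1 + 4 * t ^ 2) ≠ 0)]
      ring
  have hderiv1 : deriv φ = Gfun := by
    funext t; rw [hφ]; exact (Psi_hasDeriv t).deriv
  have hderiv2 : deriv (deriv φ) = Hfun := by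
    rw [hderiv1]; funext t; exact (G_hasDeriv t).deriv
  have hit2 : iteratedDeriv 2 φ = Hfun := by
    rw [show (2:ℕ) = 0 + 1 + 1 from rfl, iteratedDeriv_succ, iteratedDeriv_succ,
      iteratedDeriv_zero, hderiv2]
  have hit3 : iteratedDeriv 3 φ = Kfun := by
    rw [show (3:ℕ) = 2 + 1 from rfl, iteratedDeriv_succ, hit2]
    funext t; exact (H_hasDeriv t).deriv
  refine ⟨?_, ?_, ?_, ?_, ?_⟩
  · intro t
    rw [hφ]
    simp [Psi, Sfun, neg_sq]
  · rw [hφ]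
    refine convexOn_of_deriv2_nonneg convex_univ ?_ ?_ ?_ ?_
    · exact fun t _ => ((Psi_hasDeriv t).differentiableAt).continuousAt.continuousWithinAt
    · intro t _
      exact ((Psi_hasDeriv t).differentiableAt).differentiableWithinAt
    · intro t _
      have : deriv Psi = Gfun := funext fun t => (Psi_hasDeriv t).deriv
      rw [this]
      exact ((G_hasDeriv t).differentiableAt).differentiableWithinAt
    · intro t _
      have h1 : deriv Psi = Gfun := funext fun t => (Psi_hasDeriv t).deriv
      have h2 : deriv^[2] Psi t = Hfun t := by
        simp only [Function.iterate_succ, Function.iterate_zero, Function.comp_apply, id_eq]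
        rw [h1]
        exact (G_hasDeriv t).deriv
      rw [h2]
      have := S_pos t
      simp only [Hfun]
      positivity
  · rw [hit2]
    norm_num [Hfun, Sfun]
  · intro t
    rw [hderiv1]
    simp only [Gfun]
    have hS := S_pos t
    have h2t : 2 * |t| < 1 + Sfun t := by
      have : 2 * |t| ≤ Sfun t := by
        rw [Sfun, show 2 * |t| = Real.sqrt (4 * t ^ 2) by
          rw [show (4:ℝ) * t ^ 2 = (2 * |t|) ^ 2 by rw [mul_pow, sq_abs]; ring,
            Real.sqrt_sq (by positivity)]]
        exact Real.sqrt_le_sqrt (by linarith)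
      linarith
    rw [abs_div, abs_of_pos (by linarith : (0:ℝ) < 1 + Sfun t)]
    rw [div_lt_one (by linarith)]
    calc |2 * t| = 2 * |t| := by rw [abs_mul]; norm_num
    _ < 1 + Sfun t := h2t
  · intro t
    rw [hit2, hit3]
    simp only [Kfun, Hfun]
    have hS := S_pos t
    have hS1 := S_one_le t
    have hsq := S_sq t
    set s := Sfun t with hs
    have h1S : (0:ℝ) < 1 + s := by linarith
    have hpos : (0:ℝ) < 2 / (s * (1 + s)) := by positivity
    have hrpow : (2 / (s * (1 + s))) ^ (3/2 : ℝ) = Real.sqrt ((2 / (s * (1 + s))) ^ 3) := by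
      rw [Real.sqrt_eq_rpow, ← Real.rpow_natCast (2 / (s * (1 + s))) 3,
        ← Real.rpow_mul hpos.le]
      norm_num
    rw [hrpow]
    have hR : (2 * Real.sqrt 2 * Real.sqrt ((2 / (s * (1 + s))) ^ 3)) ^ 2
        = 64 / (s * (1 + s)) ^ 3 := by
      rw [mul_pow, mul_pow, Real.sq_sqrt (by norm_num : (0:ℝ) ≤ 2),
        Real.sq_sqrt (by positivity : (0:ℝ) ≤ (2 / (s * (1 + s))) ^ 3), div_pow]
      ring
    have hineq : t ^ 2 * (1 + 2 * s) ^ 2 ≤ s ^ 3 * (1 + s) := by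
      nlinarith [hsq, hS1, sq_nonneg (1 + 2 * s)]
    have key : (-(8 * t * (1 + 2 * s)) / (s ^ 3 * (1 + s) ^ 2)) ^ 2 ≤
        (2 * Real.sqrt 2 * Real.sqrt ((2 / (s * (1 + s))) ^ 3)) ^ 2 := by
      rw [hR, div_pow, div_le_div_iff₀ (by positivity) (by positivity)]
      have hmul := mul_le_mul_of_nonneg_right hineq
        (show (0:ℝ) ≤ s ^ 3 * (1 + s) ^ 3 by positivity)
      nlinarith [hmul]
    have h := Real.sqrt_le_sqrt key
    rw [Real.sqrt_sq_eq_abs, Real.sqrt_sq_eq_abs] at h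
    exact h.trans_eq (abs_of_nonneg (by positivity))
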